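/- Let n ≥ 2 and let D = (d_1, d_2, …, d_n) be a nondecreasing sequence of nonnegative integers. Then there exist nonnegative integers f and g and an n×n matrix M of nonnegative integers with zero diagonal whose i-th row sum equals d_i for every i, such that f = max_{i<j} (M(i,j) + M(j,i)), g = min_{i<j} (M(i,j) + M(j,i)), and for every n×n matrix M' of nonnegative integers with zero diagonal whose i-th row sum equals d_i for every i one has max_{i<j} (M'(i,j) + M'(j,i)) ≥ f and min_{i<j} (M'(i,j) + M'(j,i)) ≤ g. In particular, a single realization of D simultaneously attains the minimum possible value of F and the maximum possible value of G. -/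
import Mathlib

open Finset

namespace MiniMaxAux

variable {n : ℕ}

/-- pair total -/
def tt (x : Fin n → Fin n → ℕ) (i j : Fin n) : ℕ := x i j + x j i

lemma tt_comm (x : Fin n → Fin n → ℕ) (i j : Fin n) : tt x i j = tt x j i := Nat.add_comm _ _

/-- potential -/
def Phi (x : Fin n → Fin n → ℕ) : ℕ := ∑ p : Fin n × Fin n, (tt x p.1 p.2)^2

/-- L1 distance -/
def dd (x y : Fin n → Fin n → ℕ) : ℕ :=
  ∑ p : Fin n × Fin n, ((x p.1 p.2 - y p.1 p.2) + (y p.1 p.2 - x p.1 p.2))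

def pairs (n : ℕ) : Finset (Fin n × Fin n) := Finset.univ.filter (fun p => p.1 < p.2)

lemma pairs_nonempty (hn : 2 ≤ n) : (pairs n).Nonempty :=
  ⟨(⟨0, by omega⟩, ⟨1, by omega⟩), by simp [pairs, Fin.mk_lt_mk]⟩

def tset (x : Fin n → Fin n → ℕ) : Finset ℕ := (pairs n).image (fun p => tt x p.1 p.2)

lemma tset_nonempty (hn : 2 ≤ n) (x : Fin n → Fin n → ℕ) : (tset x).Nonempty :=
  (pairs_nonempty hn).image _

noncomputable def FF (hn : 2 ≤ n) (x : Fin n → Fin n → ℕ) : ℕ := (tset x).max' (tset_nonempty hn x)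
noncomputable def GG (hn : 2 ≤ n) (x : Fin n → Fin n → ℕ) : ℕ := (tset x).min' (tset_nonempty hn x)

lemma mem_tset (x : Fin n → Fin n → ℕ) {i j : Fin n} (h : i < j) : tt x i j ∈ tset x := by
  exact Finset.mem_image.2 ⟨(i, j), by simp [pairs, h], rfl⟩

lemma tt_le_FF (hn : 2 ≤ n) (x : Fin n → Fin n → ℕ) {i j : Fin n} (h : i ≠ j) :
    tt x i j ≤ FF hn x := by
  rcases lt_or_gt_of_ne h with h' | h'
  · exact Finset.le_max' _ _ (mem_tset x h')
  · rw [tt_comm]; exact Finset.le_max' _ _ (mem_tset x h')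

lemma GG_le_tt (hn : 2 ≤ n) (x : Fin n → Fin n → ℕ) {i j : Fin n} (h : i ≠ j) :
    GG hn x ≤ tt x i j := by
  rcases lt_or_gt_of_ne h with h' | h'
  · exact Finset.min'_le _ _ (mem_tset x h')
  · rw [tt_comm]; exact Finset.min'_le _ _ (mem_tset x h')

lemma exists_FF (hn : 2 ≤ n) (x : Fin n → Fin n → ℕ) :
    ∃ i j : Fin n, i < j ∧ tt x i j = FF hn x := by
  have h := Finset.max'_mem (tset x) (tset_nonempty hn x)
  simp only [tset, Finset.mem_image] at h
  obtain ⟨p, hp, hval⟩ := h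
  exact ⟨p.1, p.2, (Finset.mem_filter.1 hp).2, hval⟩

lemma exists_GG (hn : 2 ≤ n) (x : Fin n → Fin n → ℕ) :
    ∃ i j : Fin n, i < j ∧ tt x i j = GG hn x := by
  have h := Finset.min'_mem (tset x) (tset_nonempty hn x)
  simp only [tset, Finset.mem_image] at h
  obtain ⟨p, hp, hval⟩ := h
  exact ⟨p.1, p.2, (Finset.mem_filter.1 hp).2, hval⟩

lemma FF_le (hn : 2 ≤ n) (x : Fin n → Fin n → ℕ) {m : ℕ}
    (h : ∀ i j : Fin n, i < j → tt x i j ≤ m) : FF hn x ≤ m := by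
  apply Finset.max'_le
  intro v hv
  simp only [tset, Finset.mem_image] at hv
  obtain ⟨p, hp, hval⟩ := hv
  exact hval ▸ h p.1 p.2 (Finset.mem_filter.1 hp).2

lemma le_GG (hn : 2 ≤ n) (x : Fin n → Fin n → ℕ) {m : ℕ}
    (h : ∀ i j : Fin n, i < j → m ≤ tt x i j) : m ≤ GG hn x := by
  apply Finset.le_min'
  intro v hv
  simp only [tset, Finset.mem_image] at hv
  obtain ⟨p, hp, hval⟩ := hv
  exact hval ▸ h p.1 p.2 (Finset.mem_filter.1 hp).2

/-- generic sum-update helper -/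
lemma sum_update {α : Type*} [Fintype α] [DecidableEq α] (g g' : α → ℕ) (s : Finset α)
    (h : ∀ p ∉ s, g' p = g p) :
    ∑ p, g' p + ∑ p ∈ s, g p = ∑ p, g p + ∑ p ∈ s, g' p := by
  have h1 := Finset.sum_sdiff (f := g') (Finset.subset_univ s)
  have h2 := Finset.sum_sdiff (f := g) (Finset.subset_univ s)
  have h3 : ∑ p ∈ Finset.univ \ s, g' p = ∑ p ∈ Finset.univ \ s, g p :=
    Finset.sum_congr rfl (fun p hp => h p (Finset.mem_sdiff.1 hp).2)
  omega

set_option linter.unusedSectionVars false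

section Move

variable (x : Fin n → Fin n → ℕ) (a b k : Fin n)

/-- move one point in row `a` from column `b` to column `k` -/
def mv : Fin n → Fin n → ℕ := fun p q =>
  if p = a ∧ q = b then x a b - 1 else if p = a ∧ q = k then x a k + 1 else x p q

variable {x a b k}
variable (hab : a ≠ b) (hak : a ≠ k) (hbk : b ≠ k) (hxab : 1 ≤ x a b)

lemma mv_ab : mv x a b k a b = x a b - 1 := if_pos ⟨rfl, rfl⟩

include hbk in
lemma mv_ak : mv x a b k a k = x a k + 1 := by
  have h : ¬ (a = a ∧ k = b) := fun h => hbk h.2.symm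
  exact (if_neg h).trans (if_pos ⟨rfl, rfl⟩)

lemma mv_other {p q : Fin n} (h1 : ¬(p = a ∧ q = b)) (h2 : ¬(p = a ∧ q = k)) :
    mv x a b k p q = x p q :=
  (if_neg h1).trans (if_neg h2)

include hab hak in
lemma mv_diag (p : Fin n) : mv x a b k p p = x p p := by
  apply mv_other
  · rintro ⟨rfl, rfl⟩; exact hab rfl
  · rintro ⟨rfl, rfl⟩; exact hak rfl

include hab hak hbk hxab in
lemma mv_row (i : Fin n) : ∑ q, mv x a b k i q = ∑ q, x i q := by
  by_cases hi : i = a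
  · subst hi
    have h := sum_update (x i) (fun q => mv x i b k i q) {b, k} (by
      intro q hq
      simp only [Finset.mem_insert, Finset.mem_singleton] at hq
      push_neg at hq
      exact mv_other (fun h => hq.1 h.2) (fun h => hq.2 h.2))
    rw [Finset.sum_pair hbk, Finset.sum_pair hbk] at h
    simp only [mv_ab, mv_ak hbk] at h
    omega
  · apply Finset.sum_congr rfl
    intro q _
    exact mv_other (fun h => hi h.1) (fun h => hi h.1)

include hab hbk hxab in
lemma mv_tt_ab : tt (mv x a b k) a b + 1 = tt x a b := by
  have h1 : mv x a b k b a = x b a := mv_other (fun h => hab h.1.symm) (fun h => hab h.1.symm)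
  rw [tt, tt, mv_ab, h1]; omega

include hak hbk in
lemma mv_tt_ak : tt (mv x a b k) a k = tt x a k + 1 := by
  have h1 : mv x a b k k a = x k a := mv_other (fun h => hak h.1.symm) (fun h => hak h.1.symm)
  rw [tt, tt, mv_ak hbk, h1]; omega

lemma mv_tt_other {p q : Fin n} (h1 : (p,q) ≠ (a,b)) (h2 : (p,q) ≠ (b,a))
    (h3 : (p,q) ≠ (a,k)) (h4 : (p,q) ≠ (k,a)) :
    tt (mv x a b k) p q = tt x p q := by
  have e1 : mv x a b k p q = x p q := by
    apply mv_other
    · rintro ⟨rfl, rfl⟩; exact h1 rfl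
    · rintro ⟨rfl, rfl⟩; exact h3 rfl
  have e2 : mv x a b k q p = x q p := by
    apply mv_other
    · rintro ⟨rfl, rfl⟩; exact h2 rfl
    · rintro ⟨rfl, rfl⟩; exact h4 rfl
  rw [tt, tt, e1, e2]

include hab hak hbk hxab in
lemma mv_Phi :
    Phi (mv x a b k) + 2*(tt x a b)^2 + 2*(tt x a k)^2
      = Phi x + 2*(tt x a b - 1)^2 + 2*(tt x a k + 1)^2 := by
  classical
  set s4 : Finset (Fin n × Fin n) := {(a,b),(b,a),(a,k),(k,a)} with hs4
  have hmem : ∀ p : Fin n × Fin n, p ∉ s4 →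
      (fun p : Fin n × Fin n => (tt (mv x a b k) p.1 p.2)^2) p
        = (fun p : Fin n × Fin n => (tt x p.1 p.2)^2) p := by
    intro p hp
    simp only [hs4, Finset.mem_insert, Finset.mem_singleton] at hp
    push_neg at hp
    simp only []
    rw [mv_tt_other (p := p.1) (q := p.2) (by simpa using hp.1) (by simpa using hp.2.1)
      (by simpa using hp.2.2.1) (by simpa using hp.2.2.2)]
  have h := sum_update (fun p : Fin n × Fin n => (tt x p.1 p.2)^2)
    (fun p : Fin n × Fin n => (tt (mv x a b k) p.1 p.2)^2) s4 hmem
  have hd1 : ((a,b) : Fin n × Fin n) ∉ ({(b,a),(a,k),(k,a)} : Finset (Fin n × Fin n)) := by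
    simp only [Finset.mem_insert, Finset.mem_singleton, Prod.mk.injEq, not_or]
    exact ⟨fun h => hab h.1, fun h => hbk h.2, fun h => hak h.1⟩
  have hd2 : ((b,a) : Fin n × Fin n) ∉ ({(a,k),(k,a)} : Finset (Fin n × Fin n)) := by
    simp only [Finset.mem_insert, Finset.mem_singleton, Prod.mk.injEq, not_or]
    exact ⟨fun h => hab h.1.symm, fun h => hbk h.1⟩
  have hd3 : ((a,k) : Fin n × Fin n) ∉ ({(k,a)} : Finset (Fin n × Fin n)) := by
    simp only [Finset.mem_singleton, Prod.mk.injEq, not_and]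
    exact fun h => absurd h hak
  have hsum : ∀ f : Fin n × Fin n → ℕ,
      ∑ p ∈ s4, f p = f (a,b) + f (b,a) + f (a,k) + f (k,a) := by
    intro f
    rw [hs4, Finset.sum_insert hd1, Finset.sum_insert hd2, Finset.sum_insert hd3,
      Finset.sum_singleton]
    ring
  rw [hsum, hsum] at h
  simp only [] at h
  have e1 : tt (mv x a b k) a b = tt x a b - 1 := by
    have := mv_tt_ab hab hbk hxab; omega
  have e2 : tt (mv x a b k) b a = tt x a b - 1 := by rw [tt_comm]; exact e1
  have e3 : tt (mv x a b k) a k = tt x a k + 1 := mv_tt_ak hak hbk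
  have e4 : tt (mv x a b k) k a = tt x a k + 1 := by rw [tt_comm]; exact e3
  have e5 : tt x b a = tt x a b := tt_comm x b a
  have e6 : tt x k a = tt x a k := tt_comm x k a
  rw [e1, e2, e3, e4, e5, e6] at h
  show (∑ p : Fin n × Fin n, (tt (mv x a b k) p.1 p.2)^2) + 2*(tt x a b)^2 + 2*(tt x a k)^2
      = (∑ p : Fin n × Fin n, (tt x p.1 p.2)^2) + 2*(tt x a b - 1)^2 + 2*(tt x a k + 1)^2
  omega

include hab hak hbk in
lemma mv_dd (y : Fin n → Fin n → ℕ) (h1 : y a b < x a b) (h2 : x a k < y a k) :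
    dd (mv x a b k) y < dd x y := by
  classical
  apply Finset.sum_lt_sum
  · intro p _
    obtain ⟨p1, p2⟩ := p
    simp only []
    by_cases e1 : p1 = a ∧ p2 = b
    · obtain ⟨rfl, rfl⟩ := e1; rw [mv_ab]; omega
    · by_cases e2 : p1 = a ∧ p2 = k
      · obtain ⟨rfl, rfl⟩ := e2; rw [mv_ak hbk]; omega
      · rw [mv_other e1 e2]
  · exact ⟨(a,b), Finset.mem_univ _, by simp only []; rw [mv_ab]; omega⟩

end Move
section Cycle

variable (u : ℕ → Fin n) (i j : ℕ)

def ee : Fin n → Fin n → ℕ := fun p q =>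
  ∑ s ∈ Finset.Ico i j, (if p = u s ∧ q = u (s+1) then 1 else 0)

variable {u i j}

lemma ee_pos {p q : Fin n} (h : 1 ≤ ee u i j p q) :
    ∃ s, i ≤ s ∧ s < j ∧ p = u s ∧ q = u (s+1) := by
  by_contra hc
  push_neg at hc
  have hz : ee u i j p q = 0 := Finset.sum_eq_zero (by
    intro s hs
    rw [Finset.mem_Ico] at hs
    rw [if_neg]
    rintro ⟨h1, h2⟩
    exact hc s hs.1 hs.2 h1 h2)
  omega

lemma ee_apply (s : ℕ) (h1 : i ≤ s) (h2 : s < j) : 1 ≤ ee u i j (u s) (u (s+1)) := by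
  calc (1:ℕ) = if (u s = u s ∧ u (s+1) = u (s+1)) then 1 else 0 := by simp
  _ ≤ _ := Finset.single_le_sum
      (f := fun s' => if u s = u s' ∧ u (s+1) = u (s'+1) then 1 else 0)
      (fun _ _ => Nat.zero_le _) (Finset.mem_Ico.2 ⟨h1, h2⟩)

lemma ee_le_one (hinj : ∀ s s', i ≤ s → s < j → i ≤ s' → s' < j → u s = u s' → s = s')
    (p q : Fin n) : ee u i j p q ≤ 1 := by
  have hcard : ee u i j p q
      = ((Finset.Ico i j).filter (fun s => p = u s ∧ q = u (s+1))).card := by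
    unfold ee
    rw [Finset.sum_boole]
    simp
  rw [hcard]
  apply Finset.card_le_one.2
  intro s hs s' hs'
  rw [Finset.mem_filter, Finset.mem_Ico] at hs hs'
  exact hinj s s' hs.1.1 hs.1.2 hs'.1.1 hs'.1.2 (hs.2.1.symm.trans hs'.2.1)

lemma shift_sum (f : ℕ → ℕ) (m : ℕ) (hf : f m = f 0) :
    ∑ r ∈ Finset.range m, f r = ∑ r ∈ Finset.range m, f (r + 1) := by
  have h1 := Finset.sum_range_succ f m
  have h2 := Finset.sum_range_succ' f m
  omega

lemma ee_row (hu : u j = u i) (hij : i ≤ j) (p : Fin n) :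
    ∑ q, ee u i j p q = ∑ q, ee u i j q p := by
  have hL : ∑ q, ee u i j p q = ∑ s ∈ Finset.Ico i j, (if p = u s then 1 else 0) := by
    unfold ee
    rw [Finset.sum_comm]
    apply Finset.sum_congr rfl
    intro s _
    by_cases hp : p = u s
    · simp [hp]
    · simp [hp]
  have hR : ∑ q, ee u i j q p = ∑ s ∈ Finset.Ico i j, (if p = u (s+1) then 1 else 0) := by
    unfold ee
    rw [Finset.sum_comm]
    apply Finset.sum_congr rfl
    intro s _
    by_cases hp : p = u (s+1)
    · simp [hp]
    · simp [hp]
  rw [hL, hR, Finset.sum_Ico_eq_sum_range, Finset.sum_Ico_eq_sum_range]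
  have hkey := shift_sum (fun r => if p = u (i + r) then 1 else 0) (j - i) (by
    have e : i + (j - i) = j := by omega
    simp only [e, Nat.add_zero, hu])
  refine hkey.trans (Finset.sum_congr rfl (fun r _ => ?_))
  have e : i + (r + 1) = i + r + 1 := by omega
  simp only [e]

lemma ee_disj (hij3 : i + 3 ≤ j) (hu : u j = u i)
    (hinj : ∀ s s', i ≤ s → s < j → i ≤ s' → s' < j → u s = u s' → s = s')
    {p q : Fin n} (h1 : 1 ≤ ee u i j p q) (h2 : 1 ≤ ee u i j q p) : False := by
  obtain ⟨s, hs1, hs2, rfl, hq⟩ := ee_pos h1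
  obtain ⟨s', hs1', hs2', hq', hp'⟩ := ee_pos h2
  by_cases hc : s' + 1 = j
  · have e1 : u s = u i := by rw [hp', hc, hu]
    have hsi : s = i := hinj s i hs1 hs2 le_rfl (by omega) e1
    have e2 : u (i+1) = u s' := by rw [← hsi, ← hq, hq']
    have : i + 1 = s' := hinj (i+1) s' (by omega) (by omega) hs1' hs2' e2
    omega
  · have e1 : s = s' + 1 := hinj s (s'+1) hs1 hs2 (by omega) (by omega) hp'
    by_cases hd : s + 1 = j
    · have e2 : u i = u s' := by rw [← hu, ← hd, ← hq, hq']
      have : i = s' := hinj i s' le_rfl (by omega) hs1' hs2' e2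
      omega
    · have e2 : u (s+1) = u s' := by rw [← hq, hq']
      have : s + 1 = s' := hinj (s+1) s' (by omega) (by omega) hs1' hs2' e2
      omega

lemma cyc (x y : Fin n → Fin n → ℕ) (u : ℕ → Fin n) (i j : ℕ)
    (hij3 : i + 3 ≤ j) (hu : u j = u i)
    (hinj : ∀ s s', i ≤ s → s < j → i ≤ s' → s' < j → u s = u s' → s = s')
    (hne : ∀ s, i ≤ s → s < j → u s ≠ u (s+1))
    (hlt : ∀ s, i ≤ s → s < j → x (u s) (u (s+1)) < y (u s) (u (s+1)))
    (hgt : ∀ s, i ≤ s → s < j → y (u (s+1)) (u s) < x (u (s+1)) (u s)) :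
    ∃ y' : Fin n → Fin n → ℕ,
      (∀ p, y' p p = y p p) ∧ (∀ p, ∑ q, y' p q = ∑ q, y p q) ∧
      (∀ p q, y' p q + y' q p = y p q + y q p) ∧ dd x y' < dd x y := by
  classical
  have hle : ∀ p q, ee u i j p q ≤ 1 := ee_le_one hinj
  have hsig : ∀ p q : Fin n, 1 ≤ ee u i j p q → x p q < y p q := by
    intro p q h
    obtain ⟨s, h1, h2, rfl, rfl⟩ := ee_pos h
    exact hlt s h1 h2
  have hsig2 : ∀ p q : Fin n, 1 ≤ ee u i j q p → y p q < x p q := by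
    intro p q h
    obtain ⟨s, h1, h2, rfl, rfl⟩ := ee_pos h
    exact hgt s h1 h2
  have hdisj : ∀ p q : Fin n, 1 ≤ ee u i j p q → 1 ≤ ee u i j q p → False :=
    fun p q h1 h2 => ee_disj hij3 hu hinj h1 h2
  refine ⟨fun p q => y p q + ee u i j q p - ee u i j p q, ?_, ?_, ?_, ?_⟩
  · intro p
    show y p p + ee u i j p p - ee u i j p p = y p p
    have hz : ee u i j p p = 0 := by
      by_contra hz
      have hz1 : 1 ≤ ee u i j p p := by omega
      obtain ⟨s, h1, h2, hp1, hp2⟩ := ee_pos hz1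
      exact hne s h1 h2 (hp1.symm.trans hp2)
    simp only [hz]
    omega
  · intro p
    show (∑ q, (y p q + ee u i j q p - ee u i j p q)) = ∑ q, y p q
    have hs : (∑ q, ((y p q + ee u i j q p - ee u i j p q) + ee u i j p q))
        = ∑ q, (y p q + ee u i j q p) := by
      apply Finset.sum_congr rfl
      intro q _
      have h1 := hle p q
      by_cases hz : ee u i j p q = 0
      · omega
      · have hx := hsig p q (by omega)
        omega
    rw [Finset.sum_add_distrib, Finset.sum_add_distrib] at hs
    have hrow := ee_row hu (by omega) p
    omega
  · intro p q
    show (y p q + ee u i j q p - ee u i j p q) + (y q p + ee u i j p q - ee u i j q p)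
      = y p q + y q p
    have b1 : ee u i j p q ≤ y p q := by
      by_cases hz : ee u i j p q = 0
      · omega
      · have hx := hsig p q (by omega); have := hle p q; omega
    have b2 : ee u i j q p ≤ y q p := by
      by_cases hz : ee u i j q p = 0
      · omega
      · have hx := hsig q p (by omega); have := hle q p; omega
    omega
  · apply Finset.sum_lt_sum
    · intro p _
      obtain ⟨p1, p2⟩ := p
      show (x p1 p2 - (y p1 p2 + ee u i j p2 p1 - ee u i j p1 p2))
          + ((y p1 p2 + ee u i j p2 p1 - ee u i j p1 p2) - x p1 p2)
        ≤ (x p1 p2 - y p1 p2) + (y p1 p2 - x p1 p2)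
      have h1 := hle p1 p2
      have h2 := hle p2 p1
      by_cases hz1 : ee u i j p1 p2 = 0
      · by_cases hz2 : ee u i j p2 p1 = 0
        · rw [hz1, hz2]; omega
        · have hx := hsig2 p1 p2 (by omega)
          omega
      · have hx := hsig p1 p2 (by omega)
        have hz2 : ee u i j p2 p1 = 0 := by
          by_contra hz2
          exact hdisj p1 p2 (by omega) (by omega)
        omega
    · refine ⟨(u i, u (i+1)), Finset.mem_univ _, ?_⟩
      show (x (u i) (u (i+1)) - (y (u i) (u (i+1)) + ee u i j (u (i+1)) (u i) - ee u i j (u i) (u (i+1))))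
          + ((y (u i) (u (i+1)) + ee u i j (u (i+1)) (u i) - ee u i j (u i) (u (i+1))) - x (u i) (u (i+1)))
        < (x (u i) (u (i+1)) - y (u i) (u (i+1))) + (y (u i) (u (i+1)) - x (u i) (u (i+1)))
      have h1 : 1 ≤ ee u i j (u i) (u (i+1)) := ee_apply i le_rfl (by omega)
      have h2 : ee u i j (u (i+1)) (u i) = 0 := by
        by_contra hz
        exact hdisj (u i) (u (i+1)) h1 (by omega)
      have hx := hsig (u i) (u (i+1)) h1
      have hb := hle (u i) (u (i+1))
      omega

end Cycle
section Opt

lemma sq_ineq (PA PB A B : ℕ) (hle : PB ≤ PA)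
    (heq : PA + 2*(B+1)^2 + 2*A^2 = PB + 2*B^2 + 2*(A+1)^2) : B ≤ A := by
  have h1 : (B+1)^2 = B^2 + 2*B + 1 := by ring
  have h2 : (A+1)^2 = A^2 + 2*A + 1 := by ring
  rw [h1, h2] at heq
  nlinarith

def Rlz (D : Fin n → ℕ) (x : Fin n → Fin n → ℕ) : Prop :=
  (∀ i, x i i = 0) ∧ (∀ i, ∑ j, x i j = D i)

lemma stepF (hn : 2 ≤ n) {D : Fin n → ℕ} (x y : Fin n → Fin n → ℕ)
    (hx : Rlz D x) (hmin : ∀ z, Rlz D z → Phi x ≤ Phi z)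
    (hy : Rlz D y) (hFy : FF hn y < FF hn x)
    (hopt : ∀ x'' y'', Rlz D x'' → (∀ z, Rlz D z → Phi x'' ≤ Phi z) → FF hn x'' = FF hn x →
        Rlz D y'' → FF hn y'' < FF hn x → dd x y ≤ dd x'' y'')
    (a b : Fin n) (hab : y a b < x a b) (htc : tt x a b = FF hn x) :
    ∃ k, k ≠ b ∧ x a k < y a k ∧ (y k a < x k a ∧ tt x k a = FF hn x) := by
  have hane : a ≠ b := by
    rintro rfl
    have h0 : x a a = 0 := hx.1 a
    omega
  -- find k with x a k < y a k
  have hk : ∃ k, x a k < y a k := by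
    by_contra hk
    push_neg at hk
    have hlt : ∑ q, y a q < ∑ q, x a q :=
      Finset.sum_lt_sum (fun q _ => hk q) ⟨b, Finset.mem_univ _, hab⟩
    rw [hx.2 a, hy.2 a] at hlt
    omega
  obtain ⟨k, hklt⟩ := hk
  have hka : k ≠ a := by
    rintro rfl
    have h0 : x k k = 0 := hx.1 k
    have h1 : y k k = 0 := hy.1 k
    omega
  have hkb : k ≠ b := by
    rintro rfl
    omega
  have hxab1 : 1 ≤ x a b := by omega
  -- the candidate move x1 = mv x a b k
  have hrlz1 : Rlz D (mv x a b k) :=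
    ⟨fun p => (mv_diag hane hka.symm p).trans (hx.1 p),
     fun p => (mv_row hane hka.symm hkb.symm hxab1 p).trans (hx.2 p)⟩
  have hPhile : Phi x ≤ Phi (mv x a b k) := hmin _ hrlz1
  have hPhiEq := mv_Phi hane hka.symm hkb.symm hxab1
  have hTle : tt x a k ≤ FF hn x := tt_le_FF hn x hka.symm
  -- Phi-local-optimality: FF hn x ≤ tt x a k + 1
  have hstep : FF hn x ≤ tt x a k + 1 := by
    obtain ⟨A', hA'⟩ : ∃ A', tt x a b = A' + 1 := ⟨tt x a b - 1, by omega⟩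
    rw [hA'] at hPhiEq
    simp only [Nat.add_sub_cancel] at hPhiEq
    have hAB : A' ≤ tt x a k := sq_ineq _ _ _ _ hPhile hPhiEq
    omega
  by_cases hcase : tt x a k + 1 = FF hn x
  · -- the Phi-preserving move contradicts distance minimality
    exfalso
    have h1 : tt x a b - 1 = tt x a k := by omega
    have h2 : tt x a k + 1 = tt x a b := by omega
    have hPhiE2 : Phi (mv x a b k) = Phi x := by
      rw [h1, h2] at hPhiEq
      nlinarith [hPhiEq]
    have hmin1 : ∀ z, Rlz D z → Phi (mv x a b k) ≤ Phi z := by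
      intro z hz
      rw [hPhiE2]
      exact hmin z hz
    have httab := mv_tt_ab (x := x) (k := k) hane hkb.symm hxab1
    have httak := mv_tt_ak (x := x) (b := b) hka.symm hkb.symm
    have hF1 : FF hn (mv x a b k) = FF hn x := by
      apply le_antisymm
      · apply FF_le
        intro p q hpq
        by_cases e1 : (p, q) = (a, b)
        · rw [Prod.mk.injEq] at e1
          obtain ⟨rfl, rfl⟩ := e1
          omega
        · by_cases e2 : (p, q) = (b, a)
          · rw [Prod.mk.injEq] at e2
            obtain ⟨rfl, rfl⟩ := e2
            have hcm : tt (mv x q p k) p q = tt (mv x q p k) q p := tt_comm _ _ _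
            omega
          · by_cases e3 : (p, q) = (a, k)
            · rw [Prod.mk.injEq] at e3
              obtain ⟨rfl, rfl⟩ := e3
              omega
            · by_cases e4 : (p, q) = (k, a)
              · rw [Prod.mk.injEq] at e4
                obtain ⟨rfl, rfl⟩ := e4
                have hcm : tt (mv x q b p) p q = tt (mv x q b p) q p := tt_comm _ _ _
                omega
              · rw [mv_tt_other e1 e2 e3 e4]
                exact tt_le_FF hn x hpq.ne
      · have h := tt_le_FF hn (mv x a b k) (hka.symm : a ≠ k)
        omega
    have hdlt : dd (mv x a b k) y < dd x y := mv_dd hane hka.symm hkb.symm y hab hklt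
    have := hopt (mv x a b k) y hrlz1 hmin1 hF1 hy hFy
    omega
  · -- tt x a k = FF hn x, propagate the invariant
    have hT : tt x a k = FF hn x := by omega
    have hYk : tt y a k ≤ FF hn y := tt_le_FF hn y hka.symm
    have e1 : x a k + x k a = FF hn x := hT
    have e2 : y a k + y k a ≤ FF hn y := hYk
    have hka2 : y k a < x k a := by omega
    refine ⟨k, hkb, hklt, hka2, ?_⟩
    rw [tt_comm]
    exact hT

end Opt
section OptF

lemma optF (hn : 2 ≤ n) {D : Fin n → ℕ} (x : Fin n → Fin n → ℕ) (hx : Rlz D x)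
    (hmin : ∀ z, Rlz D z → Phi x ≤ Phi z)
    (y : Fin n → Fin n → ℕ) (hy : Rlz D y) : FF hn x ≤ FF hn y := by
  classical
  by_contra hcon
  push_neg at hcon
  set c := FF hn x with hc
  have hPex : ∃ m : ℕ, ∃ x' : Fin n → Fin n → ℕ, ∃ y' : Fin n → Fin n → ℕ,
      Rlz D x' ∧ (∀ z, Rlz D z → Phi x' ≤ Phi z) ∧ FF hn x' = c ∧
      Rlz D y' ∧ FF hn y' < c ∧ dd x' y' = m :=
    ⟨dd x y, x, y, hx, hmin, rfl, hy, hcon, rfl⟩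
  obtain ⟨x', y', hx', hmin', hFx', hy', hFy', hdxy⟩ := Nat.find_spec hPex
  have hminim : ∀ x'' y'', Rlz D x'' → (∀ z, Rlz D z → Phi x'' ≤ Phi z) → FF hn x'' = c →
      Rlz D y'' → FF hn y'' < c → dd x' y' ≤ dd x'' y'' := by
    intro x'' y'' h1 h2 h3 h4 h5
    rw [hdxy]
    exact Nat.find_le ⟨x'', y'', h1, h2, h3, h4, h5, rfl⟩
  -- step lemma specialized
  have hFyx' : FF hn y' < FF hn x' := by omega
  have hopt' : ∀ x'' y'', Rlz D x'' → (∀ z, Rlz D z → Phi x'' ≤ Phi z) → FF hn x'' = FF hn x' →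
      Rlz D y'' → FF hn y'' < FF hn x' → dd x' y' ≤ dd x'' y'' := by
    intro x'' y'' h1 h2 h3 h4 h5
    exact hminim x'' y'' h1 h2 (by omega) h4 (by omega)
  have step : ∀ a b : Fin n, (y' a b < x' a b ∧ tt x' a b = FF hn x') →
      ∃ k, k ≠ b ∧ x' a k < y' a k ∧ (y' k a < x' k a ∧ tt x' k a = FF hn x') :=
    fun a b h => stepF hn x' y' hx' hmin' hy' hFyx' hopt' a b h.1 h.2
  -- initial invariant
  obtain ⟨p0, q0, hp0q0, htp0⟩ := exists_FF hn x'
  have htyp0 : tt y' p0 q0 ≤ FF hn y' := tt_le_FF hn y' hp0q0.ne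
  have hstart : ∃ a b : Fin n, y' a b < x' a b ∧ tt x' a b = FF hn x' := by
    have e1 : x' p0 q0 + x' q0 p0 = FF hn x' := htp0
    have e2 : y' p0 q0 + y' q0 p0 ≤ FF hn y' := htyp0
    by_cases h : y' p0 q0 < x' p0 q0
    · exact ⟨p0, q0, h, htp0⟩
    · have h2 : y' q0 p0 < x' q0 p0 := by omega
      refine ⟨q0, p0, h2, ?_⟩
      rw [tt_comm]
      exact htp0
  obtain ⟨a0, b0, hInv0⟩ := hstart
  -- the chain
  let T := {p : Fin n × Fin n // y' p.1 p.2 < x' p.1 p.2 ∧ tt x' p.1 p.2 = FF hn x'}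
  let nxt : T → T := fun t => ⟨((step t.1.1 t.1.2 t.2).choose, t.1.1),
    (step t.1.1 t.1.2 t.2).choose_spec.2.2⟩
  let sq0 : T := ⟨(a0, b0), hInv0⟩
  let sqn : ℕ → T := fun m => nxt^[m] sq0
  let u : ℕ → Fin n := fun m => (sqn m).1.2
  have hsq : ∀ m, sqn (m+1) = nxt (sqn m) := fun m => Function.iterate_succ_apply' nxt m sq0
  have hu1 : ∀ m, u (m+1) = (sqn m).1.1 := by
    intro m
    show (sqn (m+1)).1.2 = (sqn m).1.1
    rw [hsq]
  have hInvm : ∀ m, y' (u (m+1)) (u m) < x' (u (m+1)) (u m)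
      ∧ tt x' (u (m+1)) (u m) = FF hn x' := by
    intro m
    rw [hu1 m]
    exact (sqn m).2
  have hchoose : ∀ m, u (m+2) = (step (sqn m).1.1 (sqn m).1.2 (sqn m).2).choose := by
    intro m
    rw [hu1 (m+1), hsq m]
  have hfwd : ∀ m, x' (u (m+1)) (u (m+2)) < y' (u (m+1)) (u (m+2)) := by
    intro m
    have h := (step (sqn m).1.1 (sqn m).1.2 (sqn m).2).choose_spec.2.1
    rw [hu1 m, hchoose m]
    exact h
  have hne2 : ∀ m, u (m+2) ≠ u m := by
    intro m
    have h := (step (sqn m).1.1 (sqn m).1.2 (sqn m).2).choose_spec.1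
    rw [hchoose m]
    exact h
  have hne1 : ∀ m, u m ≠ u (m+1) := by
    intro m h
    have h2 := (hInvm m).1
    rw [← h] at h2
    have h3 : x' (u m) (u m) = 0 := hx'.1 (u m)
    omega
  -- pigeonhole
  have hrep : ∃ i j : ℕ, 1 ≤ i ∧ i < j ∧ u i = u j := by
    have hcard : Fintype.card (Fin n) < Fintype.card (Fin (n+1)) := by simp
    obtain ⟨s, s', hss', heq⟩ :=
      Fintype.exists_ne_map_eq_of_card_lt (fun s : Fin (n+1) => u (s.val + 1)) hcard
    rcases lt_or_gt_of_ne hss' with h | h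
    · have hv := Fin.lt_def.mp h
      exact ⟨s.val + 1, s'.val + 1, by omega, by omega, heq⟩
    · have hv := Fin.lt_def.mp h
      exact ⟨s'.val + 1, s.val + 1, by omega, by omega, heq.symm⟩
  have hQex : ∃ j : ℕ, ∃ i : ℕ, 1 ≤ i ∧ i < j ∧ u i = u j := by
    obtain ⟨i, j, h1, h2, h3⟩ := hrep
    exact ⟨j, i, h1, h2, h3⟩
  obtain ⟨i0, hi01, hi0j, hu0⟩ := Nat.find_spec hQex
  have hmin0 : ∀ m, m < Nat.find hQex → ¬ ∃ i, 1 ≤ i ∧ i < m ∧ u i = u m :=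
    fun m hm => Nat.find_min hQex hm
  set j0 := Nat.find hQex with hj0
  have hinj : ∀ s s', i0 ≤ s → s < j0 → i0 ≤ s' → s' < j0 → u s = u s' → s = s' := by
    intro s s' h1 h2 h3 h4 heq
    by_contra hnee
    rcases lt_or_gt_of_ne hnee with h | h
    · exact hmin0 s' h4 ⟨s, by omega, h, heq⟩
    · exact hmin0 s h2 ⟨s', by omega, h, heq.symm⟩
  have hj3 : i0 + 3 ≤ j0 := by
    by_contra hcc
    push_neg at hcc
    have hor : j0 = i0 + 1 ∨ j0 = i0 + 2 := by omega
    rcases hor with h | h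
    · rw [h] at hu0
      exact hne1 i0 hu0
    · rw [h] at hu0
      exact hne2 i0 hu0.symm
  -- apply the cycle move
  obtain ⟨y2, hy2diag, hy2row, hy2tt, hy2dd⟩ := cyc x' y' u i0 j0 hj3 hu0.symm hinj
    (fun s h1 h2 => hne1 s)
    (fun s h1 h2 => by
      obtain ⟨m, rfl⟩ : ∃ m, s = m + 1 := ⟨s - 1, by omega⟩
      exact hfwd m)
    (fun s h1 h2 => (hInvm s).1)
  have hrlz2 : Rlz D y2 := ⟨fun p => (hy2diag p).trans (hy'.1 p),
    fun p => (hy2row p).trans (hy'.2 p)⟩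
  have hF2 : FF hn y2 < c := by
    have hle2 : FF hn y2 ≤ FF hn y' := by
      apply FF_le
      intro p q hpq
      have e : tt y2 p q = tt y' p q := hy2tt p q
      rw [e]
      exact tt_le_FF hn y' hpq.ne
    omega
  have := hminim x' y2 hx' hmin' hFx' hrlz2 hF2
  omega

end OptF
section OptG

lemma stepG (hn : 2 ≤ n) {D : Fin n → ℕ} (x y : Fin n → Fin n → ℕ)
    (hx : Rlz D x) (hmin : ∀ z, Rlz D z → Phi x ≤ Phi z)
    (hy : Rlz D y) (hGy : GG hn x < GG hn y)
    (hopt : ∀ x'' y'', Rlz D x'' → (∀ z, Rlz D z → Phi x'' ≤ Phi z) → GG hn x'' = GG hn x →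
        Rlz D y'' → GG hn x < GG hn y'' → dd x y ≤ dd x'' y'')
    (a b : Fin n) (hab : x a b < y a b) (htc : tt x a b = GG hn x) :
    ∃ k, k ≠ b ∧ y a k < x a k ∧ (x k a < y k a ∧ tt x k a = GG hn x) := by
  have hane : a ≠ b := by
    rintro rfl
    have h0 : y a a = 0 := hy.1 a
    omega
  have hk : ∃ k, y a k < x a k := by
    by_contra hk
    push_neg at hk
    have hlt : ∑ q, x a q < ∑ q, y a q :=
      Finset.sum_lt_sum (fun q _ => hk q) ⟨b, Finset.mem_univ _, hab⟩
    rw [hx.2 a, hy.2 a] at hlt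
    omega
  obtain ⟨k, hklt⟩ := hk
  have hka : k ≠ a := by
    rintro rfl
    have h0 : x k k = 0 := hx.1 k
    have h1 : y k k = 0 := hy.1 k
    omega
  have hkb : k ≠ b := by
    rintro rfl
    omega
  have hxak1 : 1 ≤ x a k := by omega
  -- candidate move: mv x a k b  (decrease (a,k), increase (a,b))
  have hrlz1 : Rlz D (mv x a k b) :=
    ⟨fun p => (mv_diag hka.symm hane p).trans (hx.1 p),
     fun p => (mv_row hka.symm hane hkb hxak1 p).trans (hx.2 p)⟩
  have hPhile : Phi x ≤ Phi (mv x a k b) := hmin _ hrlz1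
  have hPhiEq := mv_Phi hka.symm hane hkb hxak1
  have hTge : GG hn x ≤ tt x a k := GG_le_tt hn x hka.symm
  have hstep : tt x a k ≤ GG hn x + 1 := by
    have h1tt : 1 ≤ tt x a k := le_trans hxak1 (Nat.le_add_right (x a k) (x k a))
    obtain ⟨A', hA'⟩ : ∃ A', tt x a k = A' + 1 := ⟨tt x a k - 1, by omega⟩
    rw [hA'] at hPhiEq
    simp only [Nat.add_sub_cancel] at hPhiEq
    have hAB : A' ≤ tt x a b := sq_ineq _ _ _ _ hPhile hPhiEq
    omega
  by_cases hcase : tt x a k = GG hn x + 1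
  · exfalso
    have h1 : tt x a k - 1 = tt x a b := by omega
    have h2 : tt x a b + 1 = tt x a k := by omega
    have hPhiE2 : Phi (mv x a k b) = Phi x := by
      rw [h1, h2] at hPhiEq
      nlinarith [hPhiEq]
    have hmin1 : ∀ z, Rlz D z → Phi (mv x a k b) ≤ Phi z := by
      intro z hz
      rw [hPhiE2]
      exact hmin z hz
    have httak := mv_tt_ab (x := x) (a := a) (b := k) (k := b) hka.symm hkb hxak1
    have httab := mv_tt_ak (x := x) (a := a) (b := k) (k := b) hane hkb
    have hG1 : GG hn (mv x a k b) = GG hn x := by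
      apply le_antisymm
      · have h := GG_le_tt hn (mv x a k b) (hka.symm : a ≠ k)
        omega
      · apply le_GG
        intro p q hpq
        by_cases e1 : (p, q) = (a, k)
        · rw [Prod.mk.injEq] at e1
          obtain ⟨rfl, rfl⟩ := e1
          omega
        · by_cases e2 : (p, q) = (k, a)
          · rw [Prod.mk.injEq] at e2
            obtain ⟨rfl, rfl⟩ := e2
            have hcm : tt (mv x q p b) p q = tt (mv x q p b) q p := tt_comm _ _ _
            omega
          · by_cases e3 : (p, q) = (a, b)
            · rw [Prod.mk.injEq] at e3
              obtain ⟨rfl, rfl⟩ := e3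
              omega
            · by_cases e4 : (p, q) = (b, a)
              · rw [Prod.mk.injEq] at e4
                obtain ⟨rfl, rfl⟩ := e4
                have hcm : tt (mv x q k p) p q = tt (mv x q k p) q p := tt_comm _ _ _
                omega
              · rw [mv_tt_other e1 e2 e3 e4]
                exact GG_le_tt hn x hpq.ne
    have hdlt : dd (mv x a k b) y < dd x y := mv_dd hka.symm hane hkb y hklt hab
    have := hopt (mv x a k b) y hrlz1 hmin1 hG1 hy hGy
    omega
  · have hT : tt x a k = GG hn x := by omega
    have hYk : GG hn y ≤ tt y a k := GG_le_tt hn y hka.symm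
    have e1 : x a k + x k a = GG hn x := hT
    have e2 : GG hn y ≤ y a k + y k a := hYk
    have hka2 : x k a < y k a := by omega
    refine ⟨k, hkb, hklt, hka2, ?_⟩
    rw [tt_comm]
    exact hT

end OptG
section OptG2

lemma optG (hn : 2 ≤ n) {D : Fin n → ℕ} (x : Fin n → Fin n → ℕ) (hx : Rlz D x)
    (hmin : ∀ z, Rlz D z → Phi x ≤ Phi z)
    (y : Fin n → Fin n → ℕ) (hy : Rlz D y) : GG hn y ≤ GG hn x := by
  classical
  by_contra hcon
  push_neg at hcon
  set c := GG hn x with hc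
  have hPex : ∃ m : ℕ, ∃ x' : Fin n → Fin n → ℕ, ∃ y' : Fin n → Fin n → ℕ,
      Rlz D x' ∧ (∀ z, Rlz D z → Phi x' ≤ Phi z) ∧ GG hn x' = c ∧
      Rlz D y' ∧ c < GG hn y' ∧ dd x' y' = m :=
    ⟨dd x y, x, y, hx, hmin, rfl, hy, hcon, rfl⟩
  obtain ⟨x', y', hx', hmin', hGx', hy', hGy', hdxy⟩ := Nat.find_spec hPex
  have hminim : ∀ x'' y'', Rlz D x'' → (∀ z, Rlz D z → Phi x'' ≤ Phi z) → GG hn x'' = c →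
      Rlz D y'' → c < GG hn y'' → dd x' y' ≤ dd x'' y'' := by
    intro x'' y'' h1 h2 h3 h4 h5
    rw [hdxy]
    exact Nat.find_le ⟨x'', y'', h1, h2, h3, h4, h5, rfl⟩
  have hGyx' : GG hn x' < GG hn y' := by omega
  have hopt' : ∀ x'' y'', Rlz D x'' → (∀ z, Rlz D z → Phi x'' ≤ Phi z) → GG hn x'' = GG hn x' →
      Rlz D y'' → GG hn x' < GG hn y'' → dd x' y' ≤ dd x'' y'' := by
    intro x'' y'' h1 h2 h3 h4 h5
    exact hminim x'' y'' h1 h2 (by omega) h4 (by omega)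
  have step : ∀ a b : Fin n, (x' a b < y' a b ∧ tt x' a b = GG hn x') →
      ∃ k, k ≠ b ∧ y' a k < x' a k ∧ (x' k a < y' k a ∧ tt x' k a = GG hn x') :=
    fun a b h => stepG hn x' y' hx' hmin' hy' hGyx' hopt' a b h.1 h.2
  -- initial invariant
  obtain ⟨p0, q0, hp0q0, htp0⟩ := exists_GG hn x'
  have htyp0 : GG hn y' ≤ tt y' p0 q0 := GG_le_tt hn y' hp0q0.ne
  have hstart : ∃ a b : Fin n, x' a b < y' a b ∧ tt x' a b = GG hn x' := by
    have e1 : x' p0 q0 + x' q0 p0 = GG hn x' := htp0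
    have e2 : GG hn y' ≤ y' p0 q0 + y' q0 p0 := htyp0
    by_cases h : x' p0 q0 < y' p0 q0
    · exact ⟨p0, q0, h, htp0⟩
    · have h2 : x' q0 p0 < y' q0 p0 := by omega
      refine ⟨q0, p0, h2, ?_⟩
      rw [tt_comm]
      exact htp0
  obtain ⟨a0, b0, hInv0⟩ := hstart
  -- the chain
  let T := {p : Fin n × Fin n // x' p.1 p.2 < y' p.1 p.2 ∧ tt x' p.1 p.2 = GG hn x'}
  let nxt : T → T := fun t => ⟨((step t.1.1 t.1.2 t.2).choose, t.1.1),
    (step t.1.1 t.1.2 t.2).choose_spec.2.2⟩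
  let sq0 : T := ⟨(a0, b0), hInv0⟩
  let sqn : ℕ → T := fun m => nxt^[m] sq0
  let u : ℕ → Fin n := fun m => (sqn m).1.2
  have hsq : ∀ m, sqn (m+1) = nxt (sqn m) := fun m => Function.iterate_succ_apply' nxt m sq0
  have hu1 : ∀ m, u (m+1) = (sqn m).1.1 := by
    intro m
    show (sqn (m+1)).1.2 = (sqn m).1.1
    rw [hsq]
  have hInvm : ∀ m, x' (u (m+1)) (u m) < y' (u (m+1)) (u m)
      ∧ tt x' (u (m+1)) (u m) = GG hn x' := by
    intro m
    rw [hu1 m]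
    exact (sqn m).2
  have hchoose : ∀ m, u (m+2) = (step (sqn m).1.1 (sqn m).1.2 (sqn m).2).choose := by
    intro m
    rw [hu1 (m+1), hsq m]
  have hfwd : ∀ m, y' (u (m+1)) (u (m+2)) < x' (u (m+1)) (u (m+2)) := by
    intro m
    have h := (step (sqn m).1.1 (sqn m).1.2 (sqn m).2).choose_spec.2.1
    rw [hu1 m, hchoose m]
    exact h
  have hne2 : ∀ m, u (m+2) ≠ u m := by
    intro m
    have h := (step (sqn m).1.1 (sqn m).1.2 (sqn m).2).choose_spec.1
    rw [hchoose m]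
    exact h
  have hne1 : ∀ m, u m ≠ u (m+1) := by
    intro m h
    have h2 := (hInvm m).1
    rw [← h] at h2
    have h3 : x' (u m) (u m) = 0 := hx'.1 (u m)
    have h4 : y' (u m) (u m) = 0 := hy'.1 (u m)
    omega
  -- pigeonhole
  have hrep : ∃ i j : ℕ, 1 ≤ i ∧ i < j ∧ u i = u j := by
    have hcard : Fintype.card (Fin n) < Fintype.card (Fin (n+1)) := by simp
    obtain ⟨s, s', hss', heq⟩ :=
      Fintype.exists_ne_map_eq_of_card_lt (fun s : Fin (n+1) => u (s.val + 1)) hcard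
    rcases lt_or_gt_of_ne hss' with h | h
    · have hv := Fin.lt_def.mp h
      exact ⟨s.val + 1, s'.val + 1, by omega, by omega, heq⟩
    · have hv := Fin.lt_def.mp h
      exact ⟨s'.val + 1, s.val + 1, by omega, by omega, heq.symm⟩
  have hQex : ∃ j : ℕ, ∃ i : ℕ, 1 ≤ i ∧ i < j ∧ u i = u j := by
    obtain ⟨i, j, h1, h2, h3⟩ := hrep
    exact ⟨j, i, h1, h2, h3⟩
  obtain ⟨i0, hi01, hi0j, hu0⟩ := Nat.find_spec hQex
  have hmin0 : ∀ m, m < Nat.find hQex → ¬ ∃ i, 1 ≤ i ∧ i < m ∧ u i = u m :=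
    fun m hm => Nat.find_min hQex hm
  set j0 := Nat.find hQex with hj0
  have hinj : ∀ s s', i0 ≤ s → s < j0 → i0 ≤ s' → s' < j0 → u s = u s' → s = s' := by
    intro s s' h1 h2 h3 h4 heq
    by_contra hnee
    rcases lt_or_gt_of_ne hnee with h | h
    · exact hmin0 s' h4 ⟨s, by omega, h, heq⟩
    · exact hmin0 s h2 ⟨s', by omega, h, heq.symm⟩
  have hj3 : i0 + 3 ≤ j0 := by
    by_contra hcc
    push_neg at hcc
    have hor : j0 = i0 + 1 ∨ j0 = i0 + 2 := by omega
    rcases hor with h | h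
    · rw [h] at hu0
      exact hne1 i0 hu0
    · rw [h] at hu0
      exact hne2 i0 hu0.symm
  -- reversed sequence
  set v : ℕ → Fin n := fun s => u (i0 + j0 - s) with hv
  have hvj : v j0 = u i0 := by
    show u (i0 + j0 - j0) = u i0
    congr 1
    omega
  have hvi : v i0 = u j0 := by
    show u (i0 + j0 - i0) = u j0
    congr 1
    omega
  have hvu : v j0 = v i0 := by rw [hvj, hvi, hu0]
  have hcan : ∀ r, i0 ≤ r → r < j0 → ∃ w, i0 ≤ w ∧ w < j0 ∧ u (i0 + j0 - r) = u w ∧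
      ((r = i0 ∧ w = i0) ∨ (i0 + j0 - r = w)) := by
    intro r hr1 hr2
    by_cases hr : i0 + j0 - r = j0
    · refine ⟨i0, le_rfl, by omega, ?_, Or.inl ⟨by omega, rfl⟩⟩
      rw [hr, ← hu0]
    · exact ⟨i0 + j0 - r, by omega, by omega, rfl, Or.inr rfl⟩
  have hinjv : ∀ s s', i0 ≤ s → s < j0 → i0 ≤ s' → s' < j0 → v s = v s' → s = s' := by
    intro s s' h1 h2 h3 h4 heq
    obtain ⟨w, hw1, hw2, hw3, hw4⟩ := hcan s h1 h2
    obtain ⟨w', hw1', hw2', hw3', hw4'⟩ := hcan s' h3 h4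
    have hww : w = w' := hinj w w' hw1 hw2 hw1' hw2' (by rw [← hw3, ← hw3']; exact heq)
    omega
  have hnev : ∀ s, i0 ≤ s → s < j0 → v s ≠ v (s+1) := by
    intro s h1 h2 heq
    have e1 : i0 + j0 - s = (i0 + j0 - s - 1) + 1 := by omega
    have e2 : i0 + j0 - (s+1) = i0 + j0 - s - 1 := by omega
    refine hne1 (i0 + j0 - s - 1) ?_
    have heq' : u (i0 + j0 - s) = u (i0 + j0 - s - 1) := by
      rw [← e2]
      exact heq
    rw [← e1]
    exact heq'.symm
  have hltv : ∀ s, i0 ≤ s → s < j0 → x' (v s) (v (s+1)) < y' (v s) (v (s+1)) := by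
    intro s h1 h2
    have e1 : i0 + j0 - s = (i0 + j0 - s - 1) + 1 := by omega
    have e2 : i0 + j0 - (s+1) = i0 + j0 - s - 1 := by omega
    have h := (hInvm (i0 + j0 - s - 1)).1
    show x' (u (i0 + j0 - s)) (u (i0 + j0 - (s+1))) < y' (u (i0 + j0 - s)) (u (i0 + j0 - (s+1)))
    rw [e1, e2]
    exact h
  have hgtv : ∀ s, i0 ≤ s → s < j0 → y' (v (s+1)) (v s) < x' (v (s+1)) (v s) := by
    intro s h1 h2
    have e1 : i0 + j0 - s = (i0 + j0 - s - 2) + 2 := by omega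
    have e2 : i0 + j0 - (s+1) = (i0 + j0 - s - 2) + 1 := by omega
    have h := hfwd (i0 + j0 - s - 2)
    show y' (u (i0 + j0 - (s+1))) (u (i0 + j0 - s)) < x' (u (i0 + j0 - (s+1))) (u (i0 + j0 - s))
    rw [e1, e2]
    exact h
  -- apply the cycle move
  obtain ⟨y2, hy2diag, hy2row, hy2tt, hy2dd⟩ := cyc x' y' v i0 j0 hj3 hvu hinjv hnev hltv hgtv
  have hrlz2 : Rlz D y2 := ⟨fun p => (hy2diag p).trans (hy'.1 p),
    fun p => (hy2row p).trans (hy'.2 p)⟩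
  have hG2 : c < GG hn y2 := by
    have hge2 : GG hn y' ≤ GG hn y2 := by
      apply le_GG
      intro p q hpq
      have e : tt y2 p q = tt y' p q := hy2tt p q
      rw [e]
      exact GG_le_tt hn y' hpq.ne
    omega
  have := hminim x' y2 hx' hmin' hGx' hrlz2 hG2
  omega

end OptG2
lemma exists_rlz (hn : 2 ≤ n) (D : Fin n → ℕ) : ∃ x, Rlz D x := by
  refine ⟨fun i j => if j = (if i.val = 0 then (⟨1, by omega⟩ : Fin n) else ⟨0, by omega⟩)
    then D i else 0, fun i => ?_, fun i => ?_⟩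
  · show (if i = (if i.val = 0 then (⟨1, by omega⟩ : Fin n) else ⟨0, by omega⟩) then D i else 0) = 0
    rw [if_neg]
    intro h
    by_cases hi : i.val = 0
    · rw [if_pos hi] at h
      have : i.val = 1 := by rw [h]
      omega
    · rw [if_neg hi] at h
      have : i.val = 0 := by rw [h]
      omega
  · show (∑ j, if j = (if i.val = 0 then (⟨1, by omega⟩ : Fin n) else ⟨0, by omega⟩) then D i else 0) = D i
    rw [Finset.sum_ite_eq' Finset.univ]
    simp

end MiniMaxAux

/-- linking property: For `n ≥ 2` and a nondecreasing sequence `D` of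
nonnegative integers there are `f`, `g` and a single realization `M` of `D` such that
`f = max_{i<j} (M i j + M j i)`, `g = min_{i<j} (M i j + M j i)`, while every realization
`M'` of `D` has `max_{i<j} (M' i j + M' j i) ≥ f` and `min_{i<j} (M' i j + M' j i) ≤ g`. -/
theorem exists_minimax_realization (n : ℕ) (hn : 2 ≤ n) (D : Fin n → ℕ) (hD : Monotone D) :
    ∃ f g : ℕ, ∃ M : Fin n → Fin n → ℕ,
      (∀ i, M i i = 0) ∧
      (∀ i, ∑ j, M i j = D i) ∧
      IsGreatest {v : ℕ | ∃ i j : Fin n, i < j ∧ v = M i j + M j i} f ∧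
      IsLeast {v : ℕ | ∃ i j : Fin n, i < j ∧ v = M i j + M j i} g ∧
      (∀ M' : Fin n → Fin n → ℕ,
        (∀ i, M' i i = 0) → (∀ i, ∑ j, M' i j = D i) →
          (∃ i j : Fin n, i < j ∧ f ≤ M' i j + M' j i) ∧
          (∃ i j : Fin n, i < j ∧ M' i j + M' j i ≤ g)) := by
  classical
  open MiniMaxAux in
  obtain ⟨x0, hx0⟩ := exists_rlz hn D
  have hPex : ∃ v : ℕ, ∃ z, Rlz D z ∧ Phi z = v := ⟨Phi x0, x0, hx0, rfl⟩
  obtain ⟨xs, hxs, hPhixs⟩ := Nat.find_spec hPex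
  have hminxs : ∀ z, Rlz D z → Phi xs ≤ Phi z := by
    intro z hz
    rw [hPhixs]
    exact Nat.find_le ⟨z, hz, rfl⟩
  refine ⟨FF hn xs, GG hn xs, xs, hxs.1, hxs.2, ?_, ?_, ?_⟩
  · constructor
    · obtain ⟨i, j, hij, heq⟩ := exists_FF hn xs
      exact ⟨i, j, hij, heq.symm⟩
    · rintro v ⟨i, j, hij, rfl⟩
      exact tt_le_FF hn xs hij.ne
  · constructor
    · obtain ⟨i, j, hij, heq⟩ := exists_GG hn xs
      exact ⟨i, j, hij, heq.symm⟩
    · rintro v ⟨i, j, hij, rfl⟩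
      exact GG_le_tt hn xs hij.ne
  · intro M' h1 h2
    have hM' : Rlz D M' := ⟨h1, h2⟩
    constructor
    · obtain ⟨i, j, hij, heq⟩ := exists_FF hn M'
      have hle := optF hn xs hxs hminxs M' hM'
      refine ⟨i, j, hij, ?_⟩
      have e : M' i j + M' j i = FF hn M' := heq
      omega
    · obtain ⟨i, j, hij, heq⟩ := exists_GG hn M'
      have hle := optG hn xs hxs hminxs M' hM'
      refine ⟨i, j, hij, ?_⟩
      have e : M' i j + M' j i = GG hn M' := heq
      omega
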